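/- Let 0 < ε < 1, let n ≥ d ≥ 1 be integers, and set d' = (d+1)(1+ε)/(1−ε). Let μ be a finitely supported probability distribution over deterministic adaptive group-testing algorithms (decision trees) on ground set [n] such that every tree T in the support of μ satisfies (1−ε)|I| ≤ T(I) ≤ (1+ε)|I| for every I ⊆ [n] (i.e., μ is a randomized Las Vegas algorithm estimating the number of defectives up to factor 1±ε with probability 1). Then there exists I₀ ⊆ [n] with |I₀| = d such that the expected number of queries E_{T∼μ}[ |Q(T,I₀)| ] ≥ log₂( C(n,d) / C(⌈d'⌉−1, d) ), where C(a,b) denotes the binomial coefficient. -/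

import Mathlib

/-- A deterministic adaptive group-testing algorithm on ground set `[n]`,
modeled as a finite binary decision tree: internal nodes are labeled by a
query `Q ⊆ [n]` and have two children (for answers `0` and `1`);
leaves are labeled by an output in `ℕ`. -/
inductive GTTree (n : ℕ) : Type where
  | leaf (out : ℕ) : GTTree n
  | node (q : Finset (Fin n)) (f0 f1 : GTTree n) : GTTree n

namespace GTTree

/-- The answer to a query `q` on the set `I` of defective items:
`true` iff `q ∩ I ≠ ∅`. -/
def answer {n : ℕ} (q I : Finset (Fin n)) : Bool :=
  decide (q ∩ I).Nonempty

/-- `T.output I`: the output label of the leaf reached when running `T`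
on the defective set `I`. -/
def output {n : ℕ} : GTTree n → Finset (Fin n) → ℕ
  | leaf out, _ => out
  | node q f0 f1, I => if answer q I then f1.output I else f0.output I

/-- `T.queries I`: the list of queries along the root-to-leaf path followed
when running `T` on the defective set `I`. -/
def queries {n : ℕ} : GTTree n → Finset (Fin n) → List (Finset (Fin n))
  | leaf _, _ => []
  | node q f0 f1, I => q :: (if answer q I then f1.queries I else f0.queries I)

/-- `T.answers I`: the answer string (sequence of branch bits) along the
root-to-leaf path followed when running `T` on the defective set `I`. -/
def answers {n : ℕ} : GTTree n → Finset (Fin n) → List Bool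
  | leaf _, _ => []
  | node q f0 f1, I =>
      answer q I :: (if answer q I then f1.answers I else f0.answers I)

variable {n : ℕ}


lemma queries_length (T : GTTree n) (I : Finset (Fin n)) :
    (T.queries I).length = (T.answers I).length := by
  induction T with
  | leaf o => rfl
  | node q f0 f1 ih0 ih1 =>
    cases hb : answer q I <;> simp [queries, answers, hb, ih0, ih1]

lemma output_eq_of_answers_eq (T : GTTree n) {I J : Finset (Fin n)}
    (h : T.answers I = T.answers J) : T.output I = T.output J := by
  induction T with
  | leaf o => rfl
  | node q f0 f1 ih0 ih1 =>
    rw [answers, answers, List.cons_eq_cons] at h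
    obtain ⟨h1, h2⟩ := h
    rw [output, output, ← h1]
    rw [← h1] at h2
    cases hb : answer q I <;> rw [hb] at h2 <;> simp only [Bool.false_eq_true,
      if_true, if_false] at h2 ⊢
    · exact ih0 h2
    · exact ih1 h2

lemma answer_union (q I J : Finset (Fin n)) :
    answer q (I ∪ J) = (answer q I || answer q J) := by
  simp only [answer, Finset.inter_union_distrib_left, ← Bool.decide_or]
  congr 1
  exact propext ⟨fun ⟨x, hx⟩ => (Finset.mem_union.1 hx).imp (⟨x, ·⟩) (⟨x, ·⟩),
    fun h => h.elim Finset.Nonempty.inl Finset.Nonempty.inr⟩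

lemma answers_union (T : GTTree n) {I J : Finset (Fin n)}
    (h : T.answers I = T.answers J) : T.answers (I ∪ J) = T.answers I := by
  induction T with
  | leaf o => rfl
  | node q f0 f1 ih0 ih1 =>
    rw [answers, answers, List.cons_eq_cons] at h
    obtain ⟨h1, h2⟩ := h
    rw [← h1] at h2
    have ha : answer q (I ∪ J) = answer q I := by rw [answer_union, ← h1, Bool.or_self]
    rw [answers, answers, ha, List.cons_eq_cons]
    refine ⟨rfl, ?_⟩
    cases hb : answer q I <;> rw [hb] at h2 <;> simp only [Bool.false_eq_true,
      if_true, if_false] at h2 ⊢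
    · exact ih0 h2
    · exact ih1 h2

lemma answers_sup {S : Finset (Finset (Fin n))} (hS : S.Nonempty) (T : GTTree n)
    (s : List Bool) (h : ∀ I ∈ S, T.answers I = s) : T.answers (S.sup id) = s := by
  induction hS using Finset.Nonempty.cons_induction with
  | singleton a => simpa using h a (by simp)
  | cons a S ha hS ih =>
    rw [Finset.sup_cons]
    have h1 : T.answers a = s := h a (by simp)
    have h2 : T.answers (S.sup id) = s := ih fun I hI => h I (Finset.mem_cons_of_mem hI)
    have h3 := T.answers_union (I := a) (J := S.sup id) (h1.trans h2.symm)
    show T.answers (a ∪ S.sup id) = s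
    rw [h3, h1]


lemma kraft (T : GTTree n) (F : Finset (Finset (Fin n))) :
    ∑ s ∈ F.image T.answers, ((1:ℝ)/2) ^ s.length ≤ 1 := by
  classical
  induction T generalizing F with
  | leaf o =>
    rcases F.eq_empty_or_nonempty with h | h
    · simp [h]
    · have he : F.image (answers (leaf o)) = {[]} := by
        ext s
        simp only [Finset.mem_image, Finset.mem_singleton]
        exact ⟨fun ⟨I, _, hs⟩ => hs.symm, fun hs => ⟨h.choose, h.choose_spec, hs.symm⟩⟩
      simp [he]
  | node q f0 f1 ih0 ih1 =>
    set F0 := F.filter (fun I => answer q I = false) with hF0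
    set F1 := F.filter (fun I => answer q I = true) with hF1
    have hF : F.image (node q f0 f1).answers =
        (F0.image f0.answers).image (List.cons false) ∪
        (F1.image f1.answers).image (List.cons true) := by
      ext s
      simp only [Finset.mem_image, Finset.mem_union, Finset.mem_filter, hF0, hF1]
      constructor
      · rintro ⟨I, hI, rfl⟩
        cases hb : answer q I
        · exact Or.inl ⟨_, ⟨I, ⟨hI, hb⟩, rfl⟩, by simp [answers, hb]⟩
        · exact Or.inr ⟨_, ⟨I, ⟨hI, hb⟩, rfl⟩, by simp [answers, hb]⟩
      · rintro (⟨t, ⟨I, ⟨hI, hb⟩, rfl⟩, rfl⟩ | ⟨t, ⟨I, ⟨hI, hb⟩, rfl⟩, rfl⟩) <;>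
          exact ⟨I, hI, by simp [answers, hb]⟩
    have hdisj : Disjoint ((F0.image f0.answers).image (List.cons false))
        ((F1.image f1.answers).image (List.cons true)) := by
      rw [Finset.disjoint_left]
      rintro s hs0 hs1
      obtain ⟨t0, _, rfl⟩ := Finset.mem_image.1 hs0
      obtain ⟨t1, _, h⟩ := Finset.mem_image.1 hs1
      exact absurd (List.cons_eq_cons.1 h).1 (by simp)
    have hinj : ∀ b : Bool, Set.InjOn (List.cons b) ↑(F0.image f0.answers ∪ F1.image f1.answers) := by
      intro b x _ y _ h
      exact (List.cons_eq_cons.1 h).2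
    have key : ∀ (b : Bool) (G : Finset (List Bool)),
        (∑ s ∈ G.image (List.cons b), ((1:ℝ)/2) ^ s.length)
          = (1/2) * ∑ t ∈ G, ((1:ℝ)/2) ^ t.length := by
      intro b G
      rw [Finset.sum_image (fun x _ y _ h => (List.cons_eq_cons.1 h).2)]
      rw [Finset.mul_sum]
      exact Finset.sum_congr rfl fun t _ => by rw [List.length_cons, pow_succ]; ring
    rw [hF, Finset.sum_union hdisj, key, key]
    have := ih0 F0
    have := ih1 F1
    nlinarith [ih0 F0, ih1 F1]


lemma fiber_card_le {d : ℕ} (ε : ℝ) (hε : 0 < ε) (hε1 : ε < 1) (hd : 1 ≤ d)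
    (T : GTTree n)
    (hT : ∀ I : Finset (Fin n),
      (1 - ε) * (I.card : ℝ) ≤ (T.output I : ℝ) ∧ (T.output I : ℝ) ≤ (1 + ε) * (I.card : ℝ))
    (s : List Bool) :
    ((Finset.powersetCard d (Finset.univ : Finset (Fin n))).filter
        (fun I => T.answers I = s)).card ≤
      ((⌈((d : ℝ) + 1) * (1 + ε) / (1 - ε)⌉ - 1).toNat).choose d := by
  classical
  set S := (Finset.powersetCard d (Finset.univ : Finset (Fin n))).filter
      (fun I => T.answers I = s) with hSdef
  rcases S.eq_empty_or_nonempty with hS | hS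
  · simp [hS]
  set U := S.sup id with hU
  have hansU : T.answers U = s :=
    answers_sup hS T s fun I hI => (Finset.mem_filter.1 hI).2
  obtain ⟨I, hI⟩ := hS
  have hIfilt := Finset.mem_filter.1 hI
  have hIcard : I.card = d := (Finset.mem_powersetCard.1 hIfilt.1).2
  have houtIU : T.output U = T.output I :=
    T.output_eq_of_answers_eq (hansU.trans hIfilt.2.symm)
  -- the cardinality of U
  have h1 : (1 - ε) * (U.card : ℝ) ≤ (T.output U : ℝ) := (hT U).1
  have h2 : (T.output I : ℝ) ≤ (1 + ε) * (I.card : ℝ) := (hT I).2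
  have hUlt : (U.card : ℝ) < ((d : ℝ) + 1) * (1 + ε) / (1 - ε) := by
    rw [houtIU] at h1
    rw [hIcard] at h2
    rw [lt_div_iff₀ (by linarith)]
    have hd1 : (d : ℝ) < (d : ℝ) + 1 := by linarith
    have hεd : (1 + ε) * (d : ℝ) < ((d : ℝ) + 1) * (1 + ε) := by 
      have : (1:ℝ) ≤ (d:ℝ) := by exact_mod_cast hd
      nlinarith
    nlinarith
  have hUm : U.card ≤ (⌈((d : ℝ) + 1) * (1 + ε) / (1 - ε)⌉ - 1).toNat := by
    have : (U.card : ℤ) < ⌈((d : ℝ) + 1) * (1 + ε) / (1 - ε)⌉ := Int.lt_ceil.2 (by exact_mod_cast hUlt)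
    have h3 : (U.card : ℤ) ≤ ⌈((d : ℝ) + 1) * (1 + ε) / (1 - ε)⌉ - 1 := by omega
    have := Int.toNat_le_toNat h3
    simpa using this
  have hsub : S ⊆ Finset.powersetCard d U := by
    intro J hJ
    rw [Finset.mem_powersetCard]
    exact ⟨Finset.le_sup (f := id) hJ, (Finset.mem_powersetCard.1 (Finset.mem_filter.1 hJ).1).2⟩
  calc S.card ≤ (Finset.powersetCard d U).card := Finset.card_le_card hsub
    _ = U.card.choose d := Finset.card_powersetCard d U
    _ ≤ _ := Nat.choose_le_choose d hUm


lemma tree_avg_bound {d : ℕ} (ε : ℝ) (hε : 0 < ε) (hε1 : ε < 1) (hd : 1 ≤ d) (hdn : d ≤ n)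
    (T : GTTree n)
    (hT : ∀ I : Finset (Fin n),
      (1 - ε) * (I.card : ℝ) ≤ (T.output I : ℝ) ∧ (T.output I : ℝ) ≤ (1 + ε) * (I.card : ℝ)) :
    Real.logb 2 ((n.choose d : ℝ) /
        (((⌈((d : ℝ) + 1) * (1 + ε) / (1 - ε)⌉ - 1).toNat).choose d : ℝ)) ≤
      (1 / (n.choose d : ℝ)) *
        ∑ I ∈ Finset.powersetCard d (Finset.univ : Finset (Fin n)),
          ((T.queries I).length : ℝ) := by
  classical
  set m := (⌈((d : ℝ) + 1) * (1 + ε) / (1 - ε)⌉ - 1).toNat with hm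
  set D := Finset.powersetCard d (Finset.univ : Finset (Fin n)) with hD
  have hDcard : D.card = n.choose d := by
    rw [hD, Finset.card_powersetCard, Finset.card_univ, Fintype.card_fin]
  have hN : (0 : ℝ) < (n.choose d : ℝ) := by
    exact_mod_cast Nat.choose_pos hdn
  have hdm : d ≤ m := by
    have hdd : ((d : ℝ) + 1) < ((d : ℝ) + 1) * (1 + ε) / (1 - ε) := by
      rw [lt_div_iff₀ (by linarith)]
      have : (0:ℝ) ≤ (d:ℝ) := Nat.cast_nonneg d
      nlinarith
    have h1 : ((d : ℤ) + 1) < ⌈((d : ℝ) + 1) * (1 + ε) / (1 - ε)⌉ :=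
      Int.lt_ceil.2 (by push_cast; exact hdd)
    have h2 : ((d : ℤ)) ≤ ⌈((d : ℝ) + 1) * (1 + ε) / (1 - ε)⌉ - 1 := by omega
    have := Int.toNat_le_toNat h2
    simpa [hm] using this
  have hK : (0 : ℝ) < (m.choose d : ℝ) := by
    exact_mod_cast Nat.choose_pos hdm
  -- Kraft with multiplicities
  have hKraft : ∑ I ∈ D, ((1:ℝ)/2) ^ ((T.queries I).length) ≤ (m.choose d : ℝ) := by
    have e1 : ∑ I ∈ D, ((1:ℝ)/2) ^ ((T.queries I).length)
        = ∑ I ∈ D, (fun s : List Bool => ((1:ℝ)/2) ^ s.length) (T.answers I) :=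
      Finset.sum_congr rfl fun I _ => by rw [queries_length]
    rw [e1, Finset.sum_comp (fun s : List Bool => ((1:ℝ)/2) ^ s.length) T.answers]
    calc ∑ s ∈ D.image T.answers,
          (D.filter (fun I => T.answers I = s)).card • ((1:ℝ)/2) ^ s.length
        ≤ ∑ s ∈ D.image T.answers, (m.choose d : ℝ) * ((1:ℝ)/2) ^ s.length := by
          refine Finset.sum_le_sum fun s _ => ?_
          rw [nsmul_eq_mul]
          refine mul_le_mul_of_nonneg_right ?_ (by positivity)
          have h : (D.filter (fun I => T.answers I = s)).card ≤ m.choose d :=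
            fiber_card_le ε hε hε1 hd T hT s
          exact_mod_cast h
      _ = (m.choose d : ℝ) * ∑ s ∈ D.image T.answers, ((1:ℝ)/2) ^ s.length := by
          rw [Finset.mul_sum]
      _ ≤ (m.choose d : ℝ) * 1 := by
          exact mul_le_mul_of_nonneg_left (kraft T D) (by positivity)
      _ = (m.choose d : ℝ) := mul_one _
  -- Jensen
  set N := (n.choose d : ℝ) with hNdef
  set L : Finset (Fin n) → ℝ := fun I => ((T.queries I).length : ℝ) with hL
  have hw1 : ∑ _I ∈ D, (1/N) = 1 := by
    rw [Finset.sum_const, hDcard, nsmul_eq_mul]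
    field_simp
    exact hNdef.symm
  have jensen := convexOn_exp.map_sum_le (t := D) (w := fun _ => 1/N)
    (p := fun I => -(Real.log 2) * L I) (fun _ _ => by positivity) hw1
    (fun _ _ => Set.mem_univ _)
  have hexp : ∀ I : Finset (Fin n),
      Real.exp (-(Real.log 2) * L I) = ((1:ℝ)/2) ^ ((T.queries I).length) := by
    intro I
    rw [hL]
    set k := (T.queries I).length
    rw [neg_mul, Real.exp_neg, mul_comm, Real.exp_nat_mul, Real.exp_log two_pos]
    rw [one_div, inv_pow]
  have hmain : Real.exp (-(Real.log 2) * ((1/N) * ∑ I ∈ D, L I)) ≤ (m.choose d : ℝ) / N := by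
    have lhs_eq : ∑ I ∈ D, (1/N) • (-(Real.log 2) * L I)
        = -(Real.log 2) * ((1/N) * ∑ I ∈ D, L I) := by
      rw [Finset.mul_sum, Finset.mul_sum]
      refine Finset.sum_congr rfl fun I _ => ?_
      simp [smul_eq_mul]; ring
    have rhs_le : ∑ I ∈ D, (1/N) • Real.exp (-(Real.log 2) * L I) ≤ (m.choose d : ℝ) / N := by
      have : ∑ I ∈ D, (1/N) • Real.exp (-(Real.log 2) * L I)
          = (1/N) * ∑ I ∈ D, ((1:ℝ)/2) ^ ((T.queries I).length) := by
        rw [Finset.mul_sum]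
        exact Finset.sum_congr rfl fun I _ => by rw [smul_eq_mul, hexp I]
      rw [this]
      have e2 : (m.choose d : ℝ) / N = (1/N) * (m.choose d : ℝ) := by ring
      rw [e2]
      exact mul_le_mul_of_nonneg_left hKraft (by positivity)
    calc Real.exp (-(Real.log 2) * ((1/N) * ∑ I ∈ D, L I))
        = Real.exp (∑ I ∈ D, (1/N) • (-(Real.log 2) * L I)) := by rw [lhs_eq]
      _ ≤ ∑ I ∈ D, (1/N) • Real.exp (-(Real.log 2) * L I) := jensen
      _ ≤ (m.choose d : ℝ) / N := rhs_le
  -- take logs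
  have hlog2 : (0:ℝ) < Real.log 2 := Real.log_pos one_lt_two
  have hloge := Real.log_le_log (Real.exp_pos _) hmain
  rw [Real.log_exp] at hloge
  have hNK : Real.log ((m.choose d : ℝ) / N) = -Real.log (N / (m.choose d : ℝ)) := by
    rw [← Real.log_inv, inv_div]
  rw [hNK] at hloge
  rw [Real.logb, div_le_iff₀ hlog2]
  nlinarith [hloge]


end GTTree

/-- Las Vegas lower bound: for any finitely supported distribution over deterministic
decision trees, each of which estimates the number of defectives up to factor `1 ± ε`
(with probability 1), there is a set `I₀` of size `d` on which the expected number of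
queries is at least `log₂ (C(n,d) / C(⌈d'⌉ - 1, d))`, where `d' = (d+1)(1+ε)/(1−ε)`.
The distribution is modeled by a finite sample space `Ω` with weights `p`. -/
theorem stmt5 {n d : ℕ} (ε : ℝ) (hε : 0 < ε) (hε1 : ε < 1) (hd : 1 ≤ d) (hdn : d ≤ n)
    {Ω : Type} [Fintype Ω] (p : Ω → ℝ) (hp : ∀ ω, 0 ≤ p ω) (hp1 : ∑ ω, p ω = 1)
    (Alg : Ω → GTTree n)
    (hT : ∀ ω, 0 < p ω → ∀ I : Finset (Fin n),
      (1 - ε) * (I.card : ℝ) ≤ ((Alg ω).output I : ℝ) ∧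
        ((Alg ω).output I : ℝ) ≤ (1 + ε) * (I.card : ℝ)) :
    ∃ I₀ : Finset (Fin n), I₀.card = d ∧
      ∑ ω, p ω * ((((Alg ω).queries I₀).length : ℝ)) ≥
        Real.logb 2 ((n.choose d : ℝ) /
          ((⌈((d : ℝ) + 1) * (1 + ε) / (1 - ε)⌉ - 1).toNat.choose d : ℝ)) := by
  classical
  set m := (⌈((d : ℝ) + 1) * (1 + ε) / (1 - ε)⌉ - 1).toNat with hm
  set c := Real.logb 2 ((n.choose d : ℝ) / (m.choose d : ℝ)) with hc
  set D := Finset.powersetCard d (Finset.univ : Finset (Fin n)) with hD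
  have hDne : D.Nonempty := by
    rw [hD]
    exact Finset.powersetCard_nonempty.2 (by simpa [Finset.card_univ] using hdn)
  have hDcard : D.card = n.choose d := by
    rw [hD, Finset.card_powersetCard, Finset.card_univ, Fintype.card_fin]
  have hN : (0 : ℝ) < (n.choose d : ℝ) := by exact_mod_cast Nat.choose_pos hdn
  set N := (n.choose d : ℝ) with hNdef
  -- per-ω bound
  have hω : ∀ ω, p ω * (N * c) ≤ p ω * ∑ I ∈ D, (((Alg ω).queries I).length : ℝ) := by
    intro ω
    rcases eq_or_lt_of_le (hp ω) with h0 | h0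
    · rw [← h0, zero_mul, zero_mul]
    · refine mul_le_mul_of_nonneg_left ?_ (hp ω)
      have htree := GTTree.tree_avg_bound ε hε hε1 hd hdn (Alg ω) (hT ω h0)
      have h2 := mul_le_mul_of_nonneg_left htree hN.le
      have h3 : N * ((1 / N) * ∑ I ∈ D, (((Alg ω).queries I).length : ℝ))
          = ∑ I ∈ D, (((Alg ω).queries I).length : ℝ) := by
        field_simp
      rw [h3] at h2
      exact h2
  have hsum : N * c ≤ ∑ I ∈ D, ∑ ω, p ω * (((Alg ω).queries I).length : ℝ) := by
    calc N * c = ∑ ω, p ω * (N * c) := by rw [← Finset.sum_mul, hp1, one_mul]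
      _ ≤ ∑ ω, p ω * ∑ I ∈ D, (((Alg ω).queries I).length : ℝ) :=
          Finset.sum_le_sum fun ω _ => hω ω
      _ = ∑ ω, ∑ I ∈ D, p ω * (((Alg ω).queries I).length : ℝ) := by
          exact Finset.sum_congr rfl fun ω _ => Finset.mul_sum _ _ _
      _ = ∑ I ∈ D, ∑ ω, p ω * (((Alg ω).queries I).length : ℝ) := Finset.sum_comm
  have hsum' : ∑ I ∈ D, c ≤ ∑ I ∈ D, ∑ ω, p ω * (((Alg ω).queries I).length : ℝ) := by
    rw [Finset.sum_const, hDcard, nsmul_eq_mul]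
    exact hsum
  obtain ⟨I₀, hI₀D, hI₀⟩ := Finset.exists_le_of_sum_le hDne hsum'
  exact ⟨I₀, (Finset.mem_powersetCard.1 hI₀D).2, hI₀⟩
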